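/- arXiv:2104.00826 — 5 statements merged into one kernel-verified Lean document; each statement's English description precedes it below -/
import Mathlib

section
/- Let e ∈ ℝ², let ω ∈ S¹ be a unit vector making an angle in [-3π/4, -π/4] with the positive x-axis, let r > 0 and μ ∈ (0, 1/√2). Define the double sector X_{e,ω}(r, μ⁻¹) = {z ∈ ℝ² : |(z - e)·ω| ≤ μ|z - e|} ∩ B_r(e). Then every vertical slice of X_{e,ω}(r, μ⁻¹) (i.e., its intersection with any vertical line {x = c}) has one-dimensional Lebesgue measure at most √8·μ·r. -/
open MeasureTheory Real

/-- Height of a straight double-sector: if `ω` is a unit vector making an angle in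
`[-3π/4, -π/4]` with the positive `x`-axis, `r > 0` and `μ ∈ (0, 1/√2)`, then every
vertical slice of the double sector `X_{e,ω}(r, μ⁻¹)` has length at most `√8·μ·r`. -/
theorem vertical_slice_of_sector (e ω : ℝ × ℝ) (r μ : ℝ) (hr : 0 < r)
    (hμ : μ ∈ Set.Ioo (0 : ℝ) (1 / Real.sqrt 2))
    (hω : ∃ θ ∈ Set.Icc (-(3 * π / 4)) (-(π / 4)), ω = (Real.cos θ, Real.sin θ))
    (c : ℝ) :
    volume {y : ℝ |
        |(c - e.1) * ω.1 + (y - e.2) * ω.2| ≤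
          μ * Real.sqrt ((c - e.1) ^ 2 + (y - e.2) ^ 2) ∧
        Real.sqrt ((c - e.1) ^ 2 + (y - e.2) ^ 2) < r} ≤
      ENNReal.ofReal (Real.sqrt 8 * μ * r) := by
  obtain ⟨hμ0, hμ2⟩ := hμ
  obtain ⟨θ, ⟨hθ1, hθ2⟩, hωeq⟩ := hω
  have hpi : (0:ℝ) < π := Real.pi_pos
  have hs2 : (0:ℝ) < Real.sqrt 2 := Real.sqrt_pos.2 (by norm_num)
  have hω2 : Real.sqrt 2 / 2 ≤ |ω.2| := by
    subst hωeq
    simp only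
    have h1 : Real.sin θ = -Real.cos (θ + π / 2) := by
      rw [Real.cos_add_pi_div_two]; ring
    have habs : |θ + π / 2| ≤ π / 4 := by
      rw [abs_le]; constructor <;> nlinarith
    have hc : Real.cos (π / 4) ≤ Real.cos (θ + π / 2) := by
      rw [← Real.cos_abs (θ + π / 2)]
      exact Real.cos_le_cos_of_nonneg_of_le_pi (abs_nonneg _) (by nlinarith) habs
    rw [Real.cos_pi_div_four] at hc
    have h2 : Real.sqrt 2 / 2 ≤ -Real.sin θ := by rw [h1]; linarith
    exact h2.trans (neg_le_abs _)
  -- key: any two points of the set are within √8·μ·r of each other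
  set A := (c - e.1) * ω.1 with hA
  have key : ∀ y₁ ∈ {y : ℝ |
        |(c - e.1) * ω.1 + (y - e.2) * ω.2| ≤
          μ * Real.sqrt ((c - e.1) ^ 2 + (y - e.2) ^ 2) ∧
        Real.sqrt ((c - e.1) ^ 2 + (y - e.2) ^ 2) < r}, ∀ y₂ ∈ {y : ℝ |
        |(c - e.1) * ω.1 + (y - e.2) * ω.2| ≤
          μ * Real.sqrt ((c - e.1) ^ 2 + (y - e.2) ^ 2) ∧
        Real.sqrt ((c - e.1) ^ 2 + (y - e.2) ^ 2) < r},
      dist y₁ y₂ ≤ Real.sqrt 8 * μ * r := by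
    intro y₁ hy₁ y₂ hy₂
    obtain ⟨h1a, h1b⟩ := hy₁
    obtain ⟨h2a, h2b⟩ := hy₂
    have b1 : |(c - e.1) * ω.1 + (y₁ - e.2) * ω.2| ≤ μ * r :=
      h1a.trans (by nlinarith)
    have b2 : |(c - e.1) * ω.1 + (y₂ - e.2) * ω.2| ≤ μ * r :=
      h2a.trans (by nlinarith)
    have hb : |(y₁ - y₂) * ω.2| ≤ 2 * (μ * r) := by
      have : (y₁ - y₂) * ω.2 = ((c - e.1) * ω.1 + (y₁ - e.2) * ω.2)
          - ((c - e.1) * ω.1 + (y₂ - e.2) * ω.2) := by ring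
      rw [this]
      calc |((c - e.1) * ω.1 + (y₁ - e.2) * ω.2) - ((c - e.1) * ω.1 + (y₂ - e.2) * ω.2)|
          ≤ |(c - e.1) * ω.1 + (y₁ - e.2) * ω.2| + |(c - e.1) * ω.1 + (y₂ - e.2) * ω.2| :=
            abs_sub _ _
        _ ≤ 2 * (μ * r) := by linarith
    rw [Real.dist_eq]
    have h88 : Real.sqrt 8 * Real.sqrt 2 = 4 := by
      rw [← Real.sqrt_mul (by norm_num)]
      norm_num
    have hmul : |y₁ - y₂| * (Real.sqrt 2 / 2) ≤ |y₁ - y₂| * |ω.2| :=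
      mul_le_mul_of_nonneg_left hω2 (abs_nonneg _)
    rw [← abs_mul] at hmul
    -- |y₁-y₂| * (√2/2) ≤ 2μr  and (√8 μ r) * (√2/2) = 2 μ r
    have hfinal : |y₁ - y₂| * (Real.sqrt 2 / 2) ≤ (Real.sqrt 8 * μ * r) * (Real.sqrt 2 / 2) := by
      have : (Real.sqrt 8 * μ * r) * (Real.sqrt 2 / 2) = 2 * (μ * r) := by
        rw [show (Real.sqrt 8 * μ * r) * (Real.sqrt 2 / 2)
            = (Real.sqrt 8 * Real.sqrt 2) * (μ * r) / 2 by ring, h88]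
        ring
      rw [this]; linarith
    have h22 : (0:ℝ) < Real.sqrt 2 / 2 := by positivity
    exact le_of_mul_le_mul_right hfinal h22
  calc volume _ ≤ EMetric.diam _ := Real.volume_le_diam _
    _ ≤ ENNReal.ofReal (Real.sqrt 8 * μ * r) := by
        apply EMetric.diam_le
        intro x hx y hy
        rw [edist_dist]
        exact ENNReal.ofReal_le_ofReal (key x hx y hy)
end

section
/- Let φ: I → ℝ be a C¹ function on a closed bounded interval I = [a,b] such that |φ'(t)| ≤ 1-δ on I for some δ ∈ (0,1), φ' is λ-bilipschitz (λ⁻¹|s-t| ≤ |φ'(s)-φ'(t)| ≤ λ|s-t| for s,t ∈ I, with λ ≥ 1). Define φ₊ on I₊ = [a-δ', b+δ'] (for δ' = δ·λ, chosen so that |φ₊'| ≤ 1) by φ₊(t) = φ(a) + φ'(a)(t-a) + (σ/(2λ))(t-a)² for t ∈ [a-δ', a], φ₊(t) = φ(t) for t ∈ [a,b], and φ₊(t) = φ(b) + φ'(b)(t-b) + (σ/(2λ))(t-b)² for t ∈ [b, b+δ'], where σ ∈ {±1} is the sign of φ''. Then φ₊ is C¹ on I₊, φ₊ is 1-Lipschitz,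 and φ₊' is λ-bilipschitz on I₊. -/
set_option maxHeartbeats 2000000


/-- Extension of the curve: given a `C¹` function `φ` on `[a,b]` with `|φ'| ≤ 1 - δ`
and `φ'` λ-bilipschitz (hence strictly monotone with direction `σ = ±1`), the
quadratic extension `φ₊` to `I₊ = [a - δ', b + δ']` with `δ' = δ·λ` is `C¹`,
`1`-Lipschitz, has `|φ₊'| ≤ 1`, and `φ₊'` is λ-bilipschitz on `I₊`. -/
theorem curve_extension (a b δ lam σ : ℝ) (hab : a < b)
    (hδ : δ ∈ Set.Ioo (0 : ℝ) 1) (hlam : 1 ≤ lam)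
    (φ φ' : ℝ → ℝ)
    (hderiv : ∀ t ∈ Set.Icc a b, HasDerivAt φ (φ' t) t)
    (hbound : ∀ t ∈ Set.Icc a b, |φ' t| ≤ 1 - δ)
    (hbilip : ∀ s ∈ Set.Icc a b, ∀ t ∈ Set.Icc a b,
      lam⁻¹ * |s - t| ≤ |φ' s - φ' t| ∧ |φ' s - φ' t| ≤ lam * |s - t|)
    (hσ : σ = 1 ∨ σ = -1)
    (hσmono : ∀ s ∈ Set.Icc a b, ∀ t ∈ Set.Icc a b, s ≤ t → σ * φ' s ≤ σ * φ' t) :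
    let δ' := δ * lam
    let φp : ℝ → ℝ := fun t =>
      if t ≤ a then φ a + φ' a * (t - a) + σ / (2 * lam) * (t - a) ^ 2
      else if t ≤ b then φ t
      else φ b + φ' b * (t - b) + σ / (2 * lam) * (t - b) ^ 2
    ∃ ψ : ℝ → ℝ,
      (∀ t ∈ Set.Icc (a - δ') (b + δ'), HasDerivAt φp (ψ t) t) ∧
      ContinuousOn ψ (Set.Icc (a - δ') (b + δ')) ∧
      LipschitzOnWith 1 φp (Set.Icc (a - δ') (b + δ')) ∧
      (∀ s ∈ Set.Icc (a - δ') (b + δ'), ∀ t ∈ Set.Icc (a - δ') (b + δ'),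
        lam⁻¹ * |s - t| ≤ |ψ s - ψ t| ∧ |ψ s - ψ t| ≤ lam * |s - t|) ∧
      (∀ t ∈ Set.Icc (a - δ') (b + δ'), |ψ t| ≤ 1) := by
  intro δ' φp
  obtain ⟨hδ0, hδ1⟩ := hδ
  have hlam0 : (0:ℝ) < lam := lt_of_lt_of_le one_pos hlam
  have hlamne : lam ≠ 0 := ne_of_gt hlam0
  have hσ2 : σ ^ 2 = 1 := by rcases hσ with h | h <;> simp [h]
  have hσabs : |σ| = 1 := by rcases hσ with h | h <;> simp [h]
  have hδ'pos : 0 < δ' := mul_pos hδ0 hlam0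
  have hinvlam : lam⁻¹ ≤ lam := le_trans (inv_le_one_of_one_le₀ hlam) hlam
  have hinvpos : 0 < lam⁻¹ := inv_pos.mpr hlam0
  set ψ : ℝ → ℝ := fun t =>
    if t ≤ a then φ' a + σ / lam * (t - a)
    else if t ≤ b then φ' t
    else φ' b + σ / lam * (t - b) with hψdef
  -- basic values
  have hψleft : ∀ t, t ≤ a → ψ t = φ' a + σ / lam * (t - a) := fun t ht => if_pos ht
  have hψmid : ∀ t ∈ Set.Icc a b, ψ t = φ' t := by
    intro t ht
    by_cases h : t ≤ a
    · have : t = a := le_antisymm h ht.1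
      simp [hψdef, this]
    · simp [hψdef, h, ht.2]
  have hψright : ∀ t, b ≤ t → ψ t = φ' b + σ / lam * (t - b) := by
    intro t ht
    by_cases h : t ≤ a
    · exact absurd (le_trans ht h) (not_le.mpr hab)
    · by_cases h2 : t ≤ b
      · have : t = b := le_antisymm h2 ht
        simp [hψdef, this, not_le.mpr hab]
      · simp [hψdef, h, h2]
  have hφpmid : ∀ t ∈ Set.Icc a b, φp t = φ t := by
    intro t ht
    by_cases h : t ≤ a
    · have : t = a := le_antisymm h ht.1
      show (if t ≤ a then _ else _) = _
      rw [if_pos h, this]; ring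
    · show (if t ≤ a then _ else _) = _
      rw [if_neg h, if_pos ht.2]
  have haI : a ∈ Set.Icc a b := ⟨le_refl a, le_of_lt hab⟩
  have hbI : b ∈ Set.Icc a b := ⟨le_of_lt hab, le_refl b⟩
  -- piecewise slope estimates for g = σ • ψ
  have hgL : ∀ s t : ℝ, s ≤ a → t ≤ a → σ * ψ t - σ * ψ s = lam⁻¹ * (t - s) := by
    intro s t hs ht
    rw [hψleft s hs, hψleft t ht]
    have h : σ * σ = 1 := by rcases hσ with h | h <;> simp [h]
    field_simp
    linear_combination (t - s) * h
  have hgR : ∀ s t : ℝ, b ≤ s → b ≤ t → σ * ψ t - σ * ψ s = lam⁻¹ * (t - s) := by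
    intro s t hs ht
    rw [hψright s hs, hψright t ht]
    have h : σ * σ = 1 := by rcases hσ with h | h <;> simp [h]
    field_simp
    linear_combination (t - s) * h
  have hgM : ∀ s ∈ Set.Icc a b, ∀ t ∈ Set.Icc a b, s ≤ t →
      lam⁻¹ * (t - s) ≤ σ * ψ t - σ * ψ s ∧ σ * ψ t - σ * ψ s ≤ lam * (t - s) := by
    intro s hs t ht hst
    rw [hψmid s hs, hψmid t ht]
    have h1 := hσmono s hs t ht hst
    have h2 := hbilip t ht s hs
    have hnn : 0 ≤ σ * φ' t - σ * φ' s := by linarith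
    have heq : σ * φ' t - σ * φ' s = |φ' t - φ' s| := by
      rw [← abs_of_nonneg hnn, show σ * φ' t - σ * φ' s = σ * (φ' t - φ' s) by ring,
        abs_mul, hσabs, one_mul]
    have habs : |t - s| = t - s := abs_of_nonneg (by linarith)
    rw [heq]
    rw [habs] at h2
    exact h2
  -- combined slope estimate
  have hg : ∀ s t : ℝ, a - δ' ≤ s → t ≤ b + δ' → s ≤ t →
      lam⁻¹ * (t - s) ≤ σ * ψ t - σ * ψ s ∧ σ * ψ t - σ * ψ s ≤ lam * (t - s) := by
    intro s t _ _ hst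
    by_cases hta : t ≤ a
    · rw [hgL s t (le_trans hst hta) hta]
      exact ⟨le_refl _, by nlinarith⟩
    · push_neg at hta
      by_cases htb : t ≤ b
      · have htI : t ∈ Set.Icc a b := ⟨le_of_lt hta, htb⟩
        by_cases hsa : s ≤ a
        · have h1 := hgL s a hsa (le_refl a)
          have h2 := hgM a haI t htI (le_of_lt hta)
          constructor <;> nlinarith
        · push_neg at hsa
          exact hgM s ⟨le_of_lt hsa, le_trans hst htb⟩ t htI hst
      · push_neg at htb
        by_cases hsa : s ≤ a
        · have h1 := hgL s a hsa (le_refl a)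
          have h2 := hgM a haI b hbI (le_of_lt hab)
          have h3 := hgR b t (le_refl b) (le_of_lt htb)
          constructor <;> nlinarith
        · push_neg at hsa
          by_cases hsb : s ≤ b
          · have h2 := hgM s ⟨le_of_lt hsa, hsb⟩ b hbI hsb
            have h3 := hgR b t (le_refl b) (le_of_lt htb)
            constructor <;> nlinarith
          · push_neg at hsb
            rw [hgR s t (le_of_lt hsb) (le_of_lt htb)]
            exact ⟨le_refl _, by nlinarith⟩
  -- bilipschitz of ψ
  have hbilipψ : ∀ s ∈ Set.Icc (a - δ') (b + δ'), ∀ t ∈ Set.Icc (a - δ') (b + δ'),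
      lam⁻¹ * |s - t| ≤ |ψ s - ψ t| ∧ |ψ s - ψ t| ≤ lam * |s - t| := by
    have key : ∀ s t : ℝ, a - δ' ≤ s → t ≤ b + δ' → s ≤ t →
        lam⁻¹ * |s - t| ≤ |ψ s - ψ t| ∧ |ψ s - ψ t| ≤ lam * |s - t| := by
      intro s t hs ht hst
      obtain ⟨h1, h2⟩ := hg s t hs ht hst
      have hnn : 0 ≤ σ * ψ t - σ * ψ s := le_trans (by nlinarith) h1
      have heq : |ψ s - ψ t| = σ * ψ t - σ * ψ s := by
        rw [← abs_of_nonneg hnn, show σ * ψ t - σ * ψ s = σ * (ψ t - ψ s) by ring,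
          abs_mul, hσabs, one_mul, abs_sub_comm]
      have habs : |s - t| = t - s := by rw [abs_sub_comm]; exact abs_of_nonneg (by linarith)
      rw [heq, habs]
      exact ⟨h1, h2⟩
    intro s hs t ht
    rcases le_total s t with h | h
    · exact key s t hs.1 ht.2 h
    · have := key t s ht.1 hs.2 h
      rwa [abs_sub_comm, abs_sub_comm (ψ t)] at this
  -- bound |ψ| ≤ 1
  have hψbound : ∀ t ∈ Set.Icc (a - δ') (b + δ'), |ψ t| ≤ 1 := by
    intro t ht
    by_cases hta : t ≤ a
    · rw [hψleft t hta]
      have h1 := hbound a haI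
      have h2 : |σ / lam * (t - a)| ≤ δ := by
        rw [abs_mul, abs_div, hσabs, abs_of_pos hlam0]
        have : |t - a| ≤ δ' := by
          rw [abs_sub_comm, abs_of_nonneg (by linarith)]
          have := ht.1; simp only [δ'] at this ⊢; linarith
        calc 1 / lam * |t - a| ≤ 1 / lam * δ' := by
              apply mul_le_mul_of_nonneg_left this (by positivity)
          _ = δ := by field_simp [δ']; simp only [δ']; ring
      calc |φ' a + σ / lam * (t - a)| ≤ |φ' a| + |σ / lam * (t - a)| := abs_add_le _ _
        _ ≤ (1 - δ) + δ := add_le_add h1 h2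
        _ = 1 := by ring
    · push_neg at hta
      by_cases htb : t ≤ b
      · rw [hψmid t ⟨le_of_lt hta, htb⟩]
        have := hbound t ⟨le_of_lt hta, htb⟩
        linarith
      · push_neg at htb
        rw [hψright t (le_of_lt htb)]
        have h1 := hbound b hbI
        have h2 : |σ / lam * (t - b)| ≤ δ := by
          rw [abs_mul, abs_div, hσabs, abs_of_pos hlam0]
          have : |t - b| ≤ δ' := by
            rw [abs_of_nonneg (by linarith)]
            have := ht.2; simp only [δ'] at this ⊢; linarith
          calc 1 / lam * |t - b| ≤ 1 / lam * δ' := by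
                apply mul_le_mul_of_nonneg_left this (by positivity)
            _ = δ := by field_simp [δ']; simp only [δ']; ring
        calc |φ' b + σ / lam * (t - b)| ≤ |φ' b| + |σ / lam * (t - b)| := abs_add_le _ _
          _ ≤ (1 - δ) + δ := add_le_add h1 h2
          _ = 1 := by ring
  -- derivative of the quadratic pieces
  have hq : ∀ x₀ t : ℝ,
      HasDerivAt (fun x => φ x₀ + φ' x₀ * (x - x₀) + σ / (2 * lam) * (x - x₀) ^ 2)
        (φ' x₀ + σ / lam * (t - x₀)) t := by
    intro x₀ t
    have h1 : HasDerivAt (fun x : ℝ => x - x₀) 1 t := (hasDerivAt_id t).sub_const x₀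
    have h2 := h1.pow 2
    have h3 := ((h1.const_mul (φ' x₀)).const_add (φ x₀)).add (h2.const_mul (σ / (2 * lam)))
    have h4 : φ' x₀ * 1 + σ / (2 * lam) * ((2 : ℕ) * (t - x₀) ^ (2 - 1) * 1)
        = φ' x₀ + σ / lam * (t - x₀) := by
      push_cast
      field_simp
    rw [h4] at h3
    exact h3
  -- the derivative claim
  have hD : ∀ t ∈ Set.Icc (a - δ') (b + δ'), HasDerivAt φp (ψ t) t := by
    intro t _
    rcases lt_trichotomy t a with hta | hta | hta
    · -- t < a
      have hev : φp =ᶠ[nhds t] fun x => φ a + φ' a * (x - a) + σ / (2 * lam) * (x - a) ^ 2 := by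
        filter_upwards [Iio_mem_nhds hta] with x hx
        show (if x ≤ a then _ else _) = _
        rw [if_pos (le_of_lt hx)]
      rw [hψleft t (le_of_lt hta)]
      exact (hq a t).congr_of_eventuallyEq hev
    · -- t = a
      subst hta
      have hψa : ψ t = φ' t := hψmid t haI
      rw [hψa]
      have hL : HasDerivWithinAt φp (φ' t) (Set.Iic t) t := by
        have := (hq t t).hasDerivWithinAt (s := Set.Iic t)
        simp only [sub_self, mul_zero, add_zero] at this
        apply this.congr
        · intro x hx
          show (if x ≤ t then _ else _) = _
          rw [if_pos (Set.mem_Iic.mp hx)]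
        · show (if t ≤ t then _ else _) = _
          rw [if_pos (le_refl t)]
      have hR : HasDerivWithinAt φp (φ' t) (Set.Ici t) t := by
        have h0 := (hderiv t haI).hasDerivWithinAt (s := Set.Ici t)
        apply h0.congr_of_eventuallyEq
        · have hmem : Set.Iio b ∈ nhdsWithin t (Set.Ici t) :=
            mem_nhdsWithin_of_mem_nhds (Iio_mem_nhds hab)
          filter_upwards [hmem, self_mem_nhdsWithin] with x hx1 hx2
          exact hφpmid x ⟨hx2, le_of_lt hx1⟩
        · exact hφpmid t haI
      have := hL.union hR
      rw [Set.Iic_union_Ici] at this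
      exact hasDerivWithinAt_univ.mp this
    · -- a < t
      rcases lt_trichotomy t b with htb | htb | htb
      · -- a < t < b
        have hev : φp =ᶠ[nhds t] φ := by
          filter_upwards [Ioo_mem_nhds hta htb] with x hx
          exact hφpmid x ⟨le_of_lt hx.1, le_of_lt hx.2⟩
        rw [hψmid t ⟨le_of_lt hta, le_of_lt htb⟩]
        exact (hderiv t ⟨le_of_lt hta, le_of_lt htb⟩).congr_of_eventuallyEq hev
      · -- t = b
        subst htb
        have hψb : ψ t = φ' t := hψmid t hbI
        rw [hψb]
        have hL : HasDerivWithinAt φp (φ' t) (Set.Iic t) t := by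
          have h0 := (hderiv t hbI).hasDerivWithinAt (s := Set.Iic t)
          apply h0.congr_of_eventuallyEq
          · have hmem : Set.Ioi a ∈ nhdsWithin t (Set.Iic t) :=
              mem_nhdsWithin_of_mem_nhds (Ioi_mem_nhds hta)
            filter_upwards [hmem, self_mem_nhdsWithin] with x hx1 hx2
            exact hφpmid x ⟨le_of_lt hx1, hx2⟩
          · exact hφpmid t hbI
        have hR : HasDerivWithinAt φp (φ' t) (Set.Ici t) t := by
          have := (hq t t).hasDerivWithinAt (s := Set.Ici t)
          simp only [sub_self, mul_zero, add_zero] at this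
          apply this.congr
          · intro x hx
            have hxt : t ≤ x := Set.mem_Ici.mp hx
            show (if x ≤ a then _ else _) = _
            rw [if_neg (by linarith : ¬ x ≤ a)]
            by_cases hxb : x ≤ t
            · have hxeq : x = t := le_antisymm hxb hxt
              rw [if_pos hxb, hxeq]
              ring
            · rw [if_neg hxb]
          · show (if t ≤ a then _ else _) = _
            rw [if_neg (not_le.mpr hta), if_pos (le_refl t)]
            ring
        have := hL.union hR
        rw [Set.Iic_union_Ici] at this
        exact hasDerivWithinAt_univ.mp this
      · -- b < t
        have hev : φp =ᶠ[nhds t] fun x => φ b + φ' b * (x - b) + σ / (2 * lam) * (x - b) ^ 2 := by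
          filter_upwards [Ioi_mem_nhds htb] with x hx
          have hbx : b < x := hx
          show (if x ≤ a then _ else _) = _
          rw [if_neg (by linarith : ¬ x ≤ a), if_neg (not_le.mpr hbx)]
        rw [hψright t (le_of_lt htb)]
        exact (hq b t).congr_of_eventuallyEq hev
  -- continuity of ψ
  have hcont : ContinuousOn ψ (Set.Icc (a - δ') (b + δ')) := by
    have hlw : LipschitzOnWith lam.toNNReal ψ (Set.Icc (a - δ') (b + δ')) := by
      rw [lipschitzOnWith_iff_dist_le_mul]
      intro s hs t ht
      rw [Real.dist_eq, Real.dist_eq, Real.coe_toNNReal lam (le_of_lt hlam0)]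
      exact (hbilipψ s hs t ht).2
    exact hlw.continuousOn
  -- Lipschitz of φp
  have hlip : LipschitzOnWith 1 φp (Set.Icc (a - δ') (b + δ')) := by
    apply Convex.lipschitzOnWith_of_nnnorm_hasDerivWithin_le (f' := ψ) (convex_Icc _ _)
    · intro x hx
      exact (hD x hx).hasDerivWithinAt
    · intro x hx
      have := hψbound x hx
      simpa [← NNReal.coe_le_coe, Real.norm_eq_abs] using this
  exact ⟨ψ, hD, hcont, hlip, hbilipψ, hψbound⟩
end

section
/- Let (ω₁, ω₂) be an orthonormal basis of ℝ², w > 0, K ≥ 0, c > 0, and let S ⊆ ℝ² be a set of points such that for all y, z ∈ S: |(y - z)·ω₁| ≤ K·|(y - z)·ω₂| + c. Suppose y₁, ..., y_N ∈ S have increasing ω₂-coordinates with consecutive gaps at least w, and every point z ∈ S satisfies dist(z·ω₂, {y_i·ω₂ : i}) ≤ 2w (i.e., z lies within 2w in the ω₂-coordinate of some node). Let F be the piecewise linear interpolant through (y_i·ω₂, y_i·ω₁) (constant outside the node range). Then every z ∈ S satisfies |F(z·ω₂) - z·ω₁| ≤ 2w·(2K + c/w) + c. -/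
set_option maxHeartbeats 1000000


/-- The dot product on `ℝ²`. -/
def dotp (p q : ℝ × ℝ) : ℝ := p.1 * q.1 + p.2 * q.2

/-- Neighborhood containment: if all pairs of points of `S` satisfy the cone
condition `|(y - z)·ω₁| ≤ K|(y - z)·ω₂| + c`, the nodes `y_i ∈ S` have increasing
`ω₂`-coordinates with gaps at least `w`, every point of `S` is within `2w` in the
`ω₂`-coordinate of a node, and `F` is the piecewise linear interpolant through the
nodes, then every `z ∈ S` satisfies `|F(z·ω₂) - z·ω₁| ≤ 2w(2K + c/w) + c`. -/
theorem graph_neighborhood_containment (ω₁ ω₂ : ℝ × ℝ)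
    (h1 : dotp ω₁ ω₁ = 1) (h2 : dotp ω₂ ω₂ = 1) (h12 : dotp ω₁ ω₂ = 0)
    (S : Set (ℝ × ℝ)) (w K c : ℝ) (hw : 0 < w) (hK : 0 ≤ K) (hc : 0 < c)
    (hcone : ∀ y ∈ S, ∀ z ∈ S, |dotp (y - z) ω₁| ≤ K * |dotp (y - z) ω₂| + c)
    (n : ℕ) (hn : 1 ≤ n) (y : ℕ → ℝ × ℝ) (hyS : ∀ i, i < n → y i ∈ S)
    (hgap : ∀ i, i + 1 < n → w ≤ dotp (y (i + 1) - y i) ω₂)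
    (hnear : ∀ z ∈ S, ∃ i, i < n ∧ |dotp z ω₂ - dotp (y i) ω₂| ≤ 2 * w)
    (F : ℝ → ℝ)
    (hF₁ : ∀ s ≤ dotp (y 0) ω₂, F s = dotp (y 0) ω₁)
    (hF₂ : ∀ s, dotp (y (n - 1)) ω₂ ≤ s → F s = dotp (y (n - 1)) ω₁)
    (hF₃ : ∀ i, i + 1 < n → ∀ s ∈ Set.Icc (dotp (y i) ω₂) (dotp (y (i + 1)) ω₂),
      F s = dotp (y i) ω₁ +
        dotp (y (i + 1) - y i) ω₁ / dotp (y (i + 1) - y i) ω₂ * (s - dotp (y i) ω₂)) :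
    ∀ z ∈ S, |F (dotp z ω₂) - dotp z ω₁| ≤ 2 * w * (2 * K + c / w) + c := by
  classical
  have dotp_sub : ∀ a b ω : ℝ × ℝ, dotp (a - b) ω = dotp a ω - dotp b ω := by
    intro a b ω
    simp only [dotp, Prod.fst_sub, Prod.snd_sub]
    ring
  set s : ℕ → ℝ := fun j => dotp (y j) ω₂ with hsdef
  set v : ℕ → ℝ := fun j => dotp (y j) ω₁ with hvdef
  set L : ℝ := K + c / w with hLdef
  have hLpos : 0 ≤ L := by positivity
  have hgap' : ∀ j, j + 1 < n → w ≤ s (j + 1) - s j := by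
    intro j hj
    have := hgap j hj
    rwa [dotp_sub] at this
  have hslope : ∀ j, j + 1 < n → |v (j + 1) - v j| ≤ L * (s (j + 1) - s j) := by
    intro j hj
    have h1' := hcone (y (j + 1)) (hyS _ hj) (y j) (hyS _ (by omega))
    rw [dotp_sub, dotp_sub] at h1'
    have hg := hgap' j hj
    have habs : |s (j + 1) - s j| = s (j + 1) - s j := abs_of_nonneg (by linarith)
    rw [habs] at h1'
    have hcw : c ≤ c / w * (s (j + 1) - s j) := by
      rw [div_mul_eq_mul_div, le_div_iff₀ hw]
      nlinarith
    calc |v (j + 1) - v j| ≤ K * (s (j + 1) - s j) + c := h1'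
      _ ≤ L * (s (j + 1) - s j) := by rw [hLdef]; nlinarith
  have smono : ∀ j k, j ≤ k → k < n → s j ≤ s k := by
    intro j k hjk
    induction k, hjk using Nat.le_induction with
    | base => intro _; exact le_rfl
    | succ k hk ih =>
      intro hlt
      have h1' := hgap' k hlt
      have h2' := ih (by omega)
      linarith
  have vbound : ∀ j k, j ≤ k → k < n → |v k - v j| ≤ L * (s k - s j) := by
    intro j k hjk
    induction k, hjk using Nat.le_induction with
    | base => intro _; simp
    | succ k hk ih =>
      intro hlt
      have h1' := hslope k hlt
      have h2' := ih (by omega)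
      have h3' := abs_sub_le (v (k + 1)) (v k) (v j)
      have h4' := hgap' k hlt
      calc |v (k + 1) - v j| ≤ |v (k + 1) - v k| + |v k - v j| := h3'
        _ ≤ L * (s (k + 1) - s k) + L * (s k - s j) := by linarith
        _ = L * (s (k + 1) - s j) := by ring
  -- trichotomy: locate t
  have tri : ∀ t : ℝ, t ≤ s 0 ∨ s (n - 1) ≤ t ∨
      ∃ j, j + 1 < n ∧ s j ≤ t ∧ t ≤ s (j + 1) := by
    intro t
    by_cases h0 : t ≤ s 0
    · exact Or.inl h0
    by_cases h1' : s (n - 1) ≤ t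
    · exact Or.inr (Or.inl h1')
    right; right
    push_neg at h0 h1'
    have hn2 : 2 ≤ n := by
      by_contra h
      have : n = 1 := by omega
      rw [this] at h1'
      simp at h1'
      linarith
    set P : ℕ → Prop := fun j => s j ≤ t with hP
    have hP0 : P 0 := le_of_lt h0
    set j := Nat.findGreatest P (n - 2) with hj
    have hjle : j ≤ n - 2 := Nat.findGreatest_le (n - 2)
    have hPj : P j := Nat.findGreatest_spec (Nat.zero_le _) hP0
    refine ⟨j, by omega, hPj, ?_⟩
    by_cases hcase : j = n - 2
    · have : j + 1 = n - 1 := by omega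
      rw [this]
      linarith
    · have hnot : ¬ P (j + 1) :=
        Nat.findGreatest_is_greatest (n := n - 2) (k := j + 1) (by omega) (by omega)
      exact le_of_not_ge hnot
  -- F at nodes
  have hFnode : ∀ i, i < n → F (s i) = v i := by
    intro i hi
    by_cases hi1 : i + 1 < n
    · have hmem : s i ∈ Set.Icc (s i) (s (i + 1)) := by
        constructor
        · exact le_rfl
        · have := hgap' i hi1; linarith
      have := hF₃ i hi1 (s i) hmem
      simpa [hsdef, hvdef] using this
    · have : i = n - 1 := by omega
      rw [this]
      exact hF₂ _ le_rfl
  -- main pointwise bound near node i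
  have main : ∀ t : ℝ, ∀ i, i < n → |t - s i| ≤ 2 * w → |F t - v i| ≤ L * (2 * w) := by
    intro t i hi ht
    have habs := abs_le.mp ht
    rcases tri t with hcase | hcase | ⟨j, hj, hjt, htj⟩
    · rw [hF₁ t hcase]
      have h1' := vbound 0 i (Nat.zero_le _) hi
      have h2' : s 0 ≤ s i := smono 0 i (Nat.zero_le _) hi
      have : |v 0 - v i| ≤ L * (2 * w) := by
        rw [abs_sub_comm] at h1' ⊢
        calc |v i - v 0| ≤ L * (s i - s 0) := by rw [abs_sub_comm]; exact h1'
          _ ≤ L * (2 * w) := by nlinarith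
      exact this
    · rw [hF₂ t hcase]
      have hn1 : n - 1 < n := by omega
      have hile : i ≤ n - 1 := by omega
      have h1' := vbound i (n - 1) hile hn1
      have h2' : s i ≤ s (n - 1) := smono i (n - 1) hile hn1
      calc |v (n - 1) - v i| ≤ L * (s (n - 1) - s i) := h1'
        _ ≤ L * (2 * w) := by nlinarith
    · have hd : w ≤ s (j + 1) - s j := hgap' j hj
      have hdpos : 0 < s (j + 1) - s j := by linarith
      set m : ℝ := dotp (y (j + 1) - y j) ω₁ / dotp (y (j + 1) - y j) ω₂ with hm
      have hFt : F t = v j + m * (t - s j) := hF₃ j hj t ⟨hjt, htj⟩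
      have hmval : m = (v (j + 1) - v j) / (s (j + 1) - s j) := by
        rw [hm, dotp_sub, dotp_sub]
      have hmabs : |m| ≤ L := by
        rw [hmval, abs_div, abs_of_pos hdpos, div_le_iff₀ hdpos]
        exact hslope j hj
      by_cases hij : i ≤ j
      · have h1' := vbound i j hij (by omega)
        have h2' : s i ≤ s j := smono i j hij (by omega)
        have hFd : F t - v i = m * (t - s j) + (v j - v i) := by rw [hFt]; ring
        have hstep : |m * (t - s j)| ≤ L * (t - s j) := by
          have ha := abs_mul m (t - s j)
          have hb : |t - s j| = t - s j := abs_of_nonneg (by linarith)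
          have hm0 := abs_nonneg m
          nlinarith
        calc |F t - v i| ≤ |m * (t - s j)| + |v j - v i| := by
              rw [hFd]; exact abs_add_le _ _
          _ ≤ L * (t - s j) + L * (s j - s i) := by linarith

          _ = L * (t - s i) := by ring
          _ ≤ L * (2 * w) := by nlinarith
      · push_neg at hij
        have hji : j + 1 ≤ i := hij
        have h1' := vbound (j + 1) i hji hi
        have h2' : s (j + 1) ≤ s i := smono (j + 1) i hji hi
        have hmd : m * (s (j + 1) - s j) = v (j + 1) - v j := by
          rw [hmval]; field_simp
        have hFd : F t - v i = m * (t - s (j + 1)) + (v (j + 1) - v i) := by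
          rw [hFt]
          have : v j = v (j + 1) - m * (s (j + 1) - s j) := by linarith [hmd]
          rw [this]; ring
        have hstep : |m * (t - s (j + 1))| ≤ L * (s (j + 1) - t) := by
          have ha := abs_mul m (t - s (j + 1))
          have hb : |t - s (j + 1)| = s (j + 1) - t := by
            rw [abs_sub_comm]; exact abs_of_nonneg (by linarith)
          have hm0 := abs_nonneg m
          nlinarith
        have h5' : |v (j + 1) - v i| ≤ L * (s i - s (j + 1)) := by
          rw [abs_sub_comm]; exact h1'
        calc |F t - v i| ≤ |m * (t - s (j + 1))| + |v (j + 1) - v i| := by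
              rw [hFd]; exact abs_add_le _ _
          _ ≤ L * (s (j + 1) - t) + L * (s i - s (j + 1)) := by linarith
          _ = L * (s i - t) := by ring
          _ ≤ L * (2 * w) := by nlinarith
  -- conclude
  intro z hz
  obtain ⟨i, hi, hni⟩ := hnear z hz
  have hzi := hcone z hz (y i) (hyS i hi)
  rw [dotp_sub, dotp_sub] at hzi
  have h1' : |dotp z ω₁ - v i| ≤ K * (2 * w) + c := by
    have : K * |dotp z ω₂ - s i| ≤ K * (2 * w) :=
      mul_le_mul_of_nonneg_left hni hK
    calc |dotp z ω₁ - v i| ≤ K * |dotp z ω₂ - s i| + c := hzi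
      _ ≤ K * (2 * w) + c := by linarith
  have h2' : |F (dotp z ω₂) - v i| ≤ L * (2 * w) := main _ i hi hni
  have h3' := abs_sub_le (F (dotp z ω₂)) (v i) (dotp z ω₁)
  have hL2 : L * (2 * w) = 2 * w * K + 2 * c := by
    rw [hLdef]; field_simp
  have htarget : 2 * w * (2 * K + c / w) + c = 4 * w * K + 3 * c := by
    field_simp; ring
  rw [htarget]
  have h4' : |v i - dotp z ω₁| ≤ K * (2 * w) + c := by
    rw [abs_sub_comm]; exact h1'
  linarith [h3', h2', h4', hL2.le, hL2.ge]
end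

section
/- Let (e,α) be admissible, ω the unit normal to C_{e,α} at e, and suppose 1/M + r < min{1/(√2·λ), δ}. Then the curve double sector 𝒳_{e,α}(r, M) is contained in the curve strip Φ_{α,+}^{-1}(J), where J = [Φ_α(e) - √8·λ(1/M + r)r, Φ_α(e) + √8·λ(1/M + r)r]. -/
/-- Curve strips contain curve double-sectors: if `1/M + r < min{1/(√2·λ), δ}`,
every point `z` of the curve double sector `𝒳_{e,α}(r, M)` satisfies
`|Φ_α(z) - Φ_α(e)| ≤ √8·λ(1/M + r)r`, i.e. `𝒳_{e,α}(r, M) ⊆ Φ_{α,+}^{-1}(J)` for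
the interval `J` of radius `√8·λ(1/M + r)r` centered at `Φ_α(e)`. -/
theorem curve_sector_subset_curve_strip (φp ψ : ℝ → ℝ) (lam δ : ℝ) (hlam : 1 ≤ lam)
    (hderiv : ∀ t, HasDerivAt φp (ψ t) t)
    (hψ1 : ∀ t, |ψ t| ≤ 1)
    (hlip : ∀ s t : ℝ, |ψ s - ψ t| ≤ lam * |s - t|)
    (e : ℝ × ℝ) (α M r : ℝ) (hM : 0 < M) (hr : 0 < r)
    (hsmall : 1 / M + r < min (1 / (Real.sqrt 2 * lam)) δ)
    (z : ℝ × ℝ) (α' t : ℝ) (hα' : |α - α'| ≤ 1 / M)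
    (hz : z = (α' + t, (e.2 - φp (e.1 - α')) + φp t))
    (hzr : Real.sqrt ((z.1 - e.1) ^ 2 + (z.2 - e.2) ^ 2) ≤ r) :
    |(z.2 - φp (z.1 - α)) - (e.2 - φp (e.1 - α))| ≤
      Real.sqrt 8 * lam * (1 / M + r) * r := by
  set g : ℝ → ℝ := fun x => φp (x - α') - φp (x - α) with hg
  have hgderiv : ∀ x : ℝ, HasDerivAt g (ψ (x - α') - ψ (x - α)) x := by
    intro x
    have h1 : HasDerivAt (fun x : ℝ => φp (x - α')) (ψ (x - α') * 1) x :=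
      (hderiv (x - α')).comp x ((hasDerivAt_id x).sub_const α')
    have h2 : HasDerivAt (fun x : ℝ => φp (x - α)) (ψ (x - α) * 1) x :=
      (hderiv (x - α)).comp x ((hasDerivAt_id x).sub_const α)
    have h3 := h1.sub h2
    simp only [mul_one] at h3
    exact h3
  -- Lipschitz bound for g with constant lam / M
  have hlipg : ∀ x y : ℝ, |g x - g y| ≤ lam * (1 / M) * |x - y| := by
    intro x y
    have := convex_univ.norm_image_sub_le_of_norm_hasDerivWithin_le
      (f := g) (f' := fun x => ψ (x - α') - ψ (x - α)) (C := lam * (1 / M))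
      (fun u _ => (hgderiv u).hasDerivWithinAt)
      (fun u _ => by
        have h := hlip (u - α') (u - α)
        have : |(u - α') - (u - α)| = |α - α'| := by
          rw [show (u - α') - (u - α) = α - α' by ring]
        rw [this] at h
        calc ‖ψ (u - α') - ψ (u - α)‖ = |ψ (u - α') - ψ (u - α)| := rfl
          _ ≤ lam * |α - α'| := h
          _ ≤ lam * (1 / M) := by
              apply mul_le_mul_of_nonneg_left hα' (by linarith))
      (Set.mem_univ y) (Set.mem_univ x)
    simpa [Real.norm_eq_abs] using this
  -- The target expression equals g z.1 - g e.1
  have hz1 : z.1 = α' + t := by rw [hz]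
  have hz2 : z.2 = (e.2 - φp (e.1 - α')) + φp t := by rw [hz]
  have hkey : (z.2 - φp (z.1 - α)) - (e.2 - φp (e.1 - α)) = g z.1 - g e.1 := by
    have ht : t = z.1 - α' := by rw [hz1]; ring
    rw [hz2, ht, hg]; ring
  -- |z.1 - e.1| ≤ r
  have hx : |z.1 - e.1| ≤ r := by
    have h1 : |z.1 - e.1| = Real.sqrt ((z.1 - e.1) ^ 2) := by
      rw [Real.sqrt_sq_eq_abs]
    have h2 : Real.sqrt ((z.1 - e.1) ^ 2) ≤
        Real.sqrt ((z.1 - e.1) ^ 2 + (z.2 - e.2) ^ 2) :=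
      Real.sqrt_le_sqrt (by nlinarith [sq_nonneg (z.2 - e.2)])
    linarith
  have hsqrt8 : (1 : ℝ) ≤ Real.sqrt 8 := by
    rw [show (1:ℝ) = Real.sqrt 1 by simp]
    exact Real.sqrt_le_sqrt (by norm_num)
  have hM' : (0:ℝ) < 1 / M := by positivity
  calc |(z.2 - φp (z.1 - α)) - (e.2 - φp (e.1 - α))|
      = |g z.1 - g e.1| := by rw [hkey]
    _ ≤ lam * (1 / M) * |z.1 - e.1| := hlipg z.1 e.1
    _ ≤ lam * (1 / M) * r := by
        apply mul_le_mul_of_nonneg_left hx (by positivity)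
    _ ≤ Real.sqrt 8 * lam * (1 / M + r) * r := by
        have hlam0 : (0:ℝ) < lam := by linarith
        nlinarith [mul_nonneg (mul_nonneg hlam0.le hr.le) hr.le,
          mul_nonneg (sub_nonneg.2 hsqrt8)
            (mul_nonneg (mul_nonneg hlam0.le (by positivity : (0:ℝ) ≤ 1/M + r)) hr.le)]
end

section
/- Let λ ≥ 1, let φ' be λ-Lipschitz with |φ'| ≤ 1, let x, y, z ∈ ℝ² with |x₁ - y₁|, |x₁ - z₁| ≤ 2ρ, and let ω₁^x = (1, φ'(x₁-α))/√(1+φ'(x₁-α)²), ω₂^x its clockwise π/2-rotation, and similarly ω₁^y, ω₂^y at y. Suppose |(y-z)·ω₁^y| ≤ K|(y-z)·ω₂^y| + c where K = λM/50 and c = r/30 for parameters M, r > 0. If 2λρ(λM/35 + 1) ≤ min{1/2, λM/100}, then |(y-z)·ω₁^x| ≤ (λM/10)|(y-z)·ω₂^x| + r/10. -/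
private lemma cs_aux (a b s t : ℝ) (hs2 : s ^ 2 = 1 + a ^ 2) (ht2 : t ^ 2 = 1 + b ^ 2)
    (hs1 : 1 ≤ s) (ht1 : 1 ≤ t) : 1 + a * b ≤ s * t := by
  have hst : (0:ℝ) < s * t := by nlinarith
  have key : (s * t) ^ 2 = (1 + a * b) ^ 2 + (a - b) ^ 2 := by
    rw [mul_pow, hs2, ht2]; ring
  nlinarith [key, sq_nonneg (a - b), hst]

private lemma cancel_aux (P Q R st : ℝ) (hst : 1 ≤ st) (hR : 0 ≤ R) (hP : 0 ≤ P)
    (h : P * st ≤ st * Q + R) : P ≤ Q + R := by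
  nlinarith

private lemma final_aux (L c ε A A' B B' : ℝ) (hL : 0 < L) (hc : 0 < c)
    (hε0 : 0 ≤ ε) (hA0 : 0 ≤ A) (hB0 : 0 ≤ B) (hA'0 : 0 ≤ A') (hB'0 : 0 ≤ B')
    (hsm1 : ε * (L / 35 + 1) ≤ 1 / 2) (hsm2 : ε * (L / 35 + 1) ≤ L / 100)
    (hcone : A' ≤ L / 50 * B' + c)
    (hE1 : A ≤ A' + ε * B') (hE2 : B' ≤ B + ε * A) :
    A ≤ L / 10 * B + 3 * c := by
  have hε12 : ε ≤ 1 / 2 := by nlinarith [mul_nonneg hε0 hL.le]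
  have hεK : ε ≤ L / 100 := by nlinarith [mul_nonneg hε0 hL.le]
  have hKε0 : (0:ℝ) ≤ L / 50 + ε := by positivity
  have step1 : A ≤ (L / 50 + ε) * B' + c := by nlinarith [mul_nonneg hε0 hB'0]
  have step2 : A ≤ (L / 50 + ε) * B + (L / 50 + ε) * ε * A + c := by
    nlinarith [mul_le_mul_of_nonneg_left hE2 hKε0]
  have step3 : (L / 50 + ε) * ε ≤ 1 / 2 := by
    have h1 : (0:ℝ) ≤ (L / 35 + 1 - (L / 50 + ε)) * ε :=
      mul_nonneg (by linarith) hε0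
    nlinarith
  have step4 : A / 2 ≤ (L / 50 + ε) * B + c := by
    nlinarith [mul_le_mul_of_nonneg_right step3 hA0]
  nlinarith [mul_le_mul_of_nonneg_right hεK hB0]

set_option maxHeartbeats 1000000 in
/-- Change-of-basis stability of cone conditions: with tangent/normal frames
`(ω₁ˣ, ω₂ˣ)` at `x` and `(ω₁ʸ, ω₂ʸ)` at `y` built from the λ-Lipschitz slope
function `ψ` with `|ψ| ≤ 1`, horizontal separations at most `2ρ`, a cone condition
in the frame at `y` with constants `(λM/50, r/30)` implies the cone condition in
the frame at `x` with constants `(λM/10, r/10)`, provided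
`2λρ(λM/35 + 1) ≤ min{1/2, λM/100}`. -/
theorem cone_change_of_basis (ψ : ℝ → ℝ) (lam : ℝ) (hlam : 1 ≤ lam)
    (hψ1 : ∀ t, |ψ t| ≤ 1)
    (hlip : ∀ s t : ℝ, |ψ s - ψ t| ≤ lam * |s - t|)
    (α ρ M r : ℝ) (hρ : 0 < ρ) (hM : 0 < M) (hr : 0 < r)
    (x y z : ℝ × ℝ) (hxy : |x.1 - y.1| ≤ 2 * ρ) (hxz : |x.1 - z.1| ≤ 2 * ρ)
    (hsmall : 2 * lam * ρ * (lam * M / 35 + 1) ≤ min (1 / 2) (lam * M / 100))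
    (hcone : |dotp (y - z) (1 / Real.sqrt (1 + ψ (y.1 - α) ^ 2),
        ψ (y.1 - α) / Real.sqrt (1 + ψ (y.1 - α) ^ 2))| ≤
      lam * M / 50 * |dotp (y - z) (ψ (y.1 - α) / Real.sqrt (1 + ψ (y.1 - α) ^ 2),
        -1 / Real.sqrt (1 + ψ (y.1 - α) ^ 2))| + r / 30) :
    |dotp (y - z) (1 / Real.sqrt (1 + ψ (x.1 - α) ^ 2),
        ψ (x.1 - α) / Real.sqrt (1 + ψ (x.1 - α) ^ 2))| ≤
      lam * M / 10 * |dotp (y - z) (ψ (x.1 - α) / Real.sqrt (1 + ψ (x.1 - α) ^ 2),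
        -1 / Real.sqrt (1 + ψ (x.1 - α) ^ 2))| + r / 10 := by
  have h12 := (le_min_iff.mp hsmall).1
  have hK2 := (le_min_iff.mp hsmall).2
  have hlam0 : (0:ℝ) < lam := lt_of_lt_of_le one_pos hlam
  set a := ψ (x.1 - α) with ha'
  set b := ψ (y.1 - α) with hb'
  have ha1 := abs_le.mp (hψ1 (x.1 - α))
  have hb1 := abs_le.mp (hψ1 (y.1 - α))
  have habd : |a - b| ≤ 2 * lam * ρ := by
    have h := hlip (x.1 - α) (y.1 - α)
    have he : x.1 - α - (y.1 - α) = x.1 - y.1 := by ring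
    rw [he] at h
    have h2 := mul_le_mul_of_nonneg_left hxy (le_of_lt hlam0)
    linarith
  set s := Real.sqrt (1 + a ^ 2) with hs'
  set t := Real.sqrt (1 + b ^ 2) with ht'
  have hs2 : s ^ 2 = 1 + a ^ 2 := Real.sq_sqrt (by positivity)
  have ht2 : t ^ 2 = 1 + b ^ 2 := Real.sq_sqrt (by positivity)
  have hs1 : 1 ≤ s := by
    rw [show (1:ℝ) = Real.sqrt 1 from Real.sqrt_one.symm]
    exact Real.sqrt_le_sqrt (by linarith [sq_nonneg a])
  have ht1 : 1 ≤ t := by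
    rw [show (1:ℝ) = Real.sqrt 1 from Real.sqrt_one.symm]
    exact Real.sqrt_le_sqrt (by linarith [sq_nonneg b])
  have hs0 : (0:ℝ) < s := lt_of_lt_of_le one_pos hs1
  have ht0 : (0:ℝ) < t := lt_of_lt_of_le one_pos ht1
  have hst1 : 1 ≤ s * t := by
    have := mul_le_mul hs1 ht1 zero_le_one (le_trans zero_le_one hs1)
    simpa using this
  have hst0 : (0:ℝ) < s * t := lt_of_lt_of_le one_pos hst1
  have hCS : 1 + a * b ≤ s * t := cs_aux a b s t hs2 ht2 hs1 ht1
  set u := y.1 - z.1 with hu'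
  set w := y.2 - z.2 with hw'
  have hd1 : dotp (y - z) (1 / s, a / s) = (u + a * w) / s := by
    simp only [dotp, Prod.fst_sub, Prod.snd_sub, ← hu', ← hw']
    field_simp
  have hd2 : dotp (y - z) (a / s, -1 / s) = (a * u - w) / s := by
    simp only [dotp, Prod.fst_sub, Prod.snd_sub, ← hu', ← hw']
    field_simp
    ring
  have hd3 : dotp (y - z) (1 / t, b / t) = (u + b * w) / t := by
    simp only [dotp, Prod.fst_sub, Prod.snd_sub, ← hu', ← hw']
    field_simp
  have hd4 : dotp (y - z) (b / t, -1 / t) = (b * u - w) / t := by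
    simp only [dotp, Prod.fst_sub, Prod.snd_sub, ← hu', ← hw']
    field_simp
    ring
  rw [hd3, hd4] at hcone
  rw [hd1, hd2]
  set A := (u + a * w) / s with hA'
  set B := (a * u - w) / s with hB'
  set A' := (u + b * w) / t with hA''
  set B' := (b * u - w) / t with hB''
  have hε0 : (0:ℝ) ≤ 2 * lam * ρ := by positivity
  -- frame change identities
  have hI1 : A * (s * t) = (1 + a * b) * A' + (b - a) * B' := by
    rw [hA', hA'', hB'']
    field_simp
    linear_combination (u + a * w) * ht2
  have hI2 : B' * (s * t) = (b - a) * A + (1 + a * b) * B := by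
    rw [hA', hB', hB'']
    field_simp
    linear_combination (b * u - w) * hs2
  have habs : |1 + a * b| ≤ s * t := by
    rw [abs_of_nonneg (by nlinarith : (0:ℝ) ≤ 1 + a * b)]; exact hCS
  have hba : |b - a| ≤ 2 * lam * ρ := by rw [abs_sub_comm]; exact habd
  -- estimates
  have hE1 : |A| ≤ |A'| + 2 * lam * ρ * |B'| := by
    refine cancel_aux _ _ _ _ hst1 (mul_nonneg hε0 (abs_nonneg _)) (abs_nonneg _) ?_
    calc |A| * (s * t) = |A * (s * t)| := by rw [abs_mul, abs_of_pos hst0]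
      _ = |(1 + a * b) * A' + (b - a) * B'| := by rw [hI1]
      _ ≤ |(1 + a * b) * A'| + |(b - a) * B'| := abs_add_le _ _
      _ = |1 + a * b| * |A'| + |b - a| * |B'| := by rw [abs_mul, abs_mul]
      _ ≤ s * t * |A'| + 2 * lam * ρ * |B'| :=
          add_le_add (mul_le_mul_of_nonneg_right habs (abs_nonneg _))
            (mul_le_mul_of_nonneg_right hba (abs_nonneg _))
  have hE2 : |B'| ≤ |B| + 2 * lam * ρ * |A| := by
    refine cancel_aux _ _ _ _ hst1 (mul_nonneg hε0 (abs_nonneg _)) (abs_nonneg _) ?_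
    calc |B'| * (s * t) = |B' * (s * t)| := by rw [abs_mul, abs_of_pos hst0]
      _ = |(b - a) * A + (1 + a * b) * B| := by rw [hI2]
      _ ≤ |(b - a) * A| + |(1 + a * b) * B| := abs_add_le _ _
      _ = |b - a| * |A| + |1 + a * b| * |B| := by rw [abs_mul, abs_mul]
      _ ≤ s * t * |B| + 2 * lam * ρ * |A| := by
          refine le_trans (add_le_add (mul_le_mul_of_nonneg_right hba (abs_nonneg _))
            (mul_le_mul_of_nonneg_right habs (abs_nonneg _))) ?_
          linarith
  -- arithmetic conclusion
  have hK0 : (0:ℝ) < lam * M := by positivity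
  have hfin := final_aux (lam * M) (r / 30) (2 * lam * ρ) |A| |A'| |B| |B'|
    hK0 (by positivity) hε0 (abs_nonneg _) (abs_nonneg _) (abs_nonneg _) (abs_nonneg _)
    (by linarith) (by linarith) hcone hE1 hE2
  linarith
end
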